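/- Let κ_nrm > 0, σ0 ∈ (0,1], θ > 1, η ∈ (0,1] and κ_c > 0, and suppose ρ ≥ (κ_c·θ·L_λ + (1/2)κ_c·θ²·L_L + κ_c·θ²·L_λ·L_c + η)/(κ_nrm·σ0²). Let x ∈ ℝⁿ with ‖c(x)‖ ≤ κ_c, and let s ∈ ℝⁿ satisfy ⟨g_T(x), s⟩ = 0 (as holds when s lies in the range of J(x)ᵀ), ‖s‖ ≤ θ‖c(x)‖, and ‖c(x + s)‖ − ‖c(x)‖ ≤ −κ_nrm·σ0²·‖c(x)‖. Then ψ(x + s) − ψ(x) ≤ −η·‖c(x)‖. -/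

import Mathlib

set_option maxHeartbeats 1000000
open InnerProductSpace

lemma descent_aux {E : Type*} [NormedAddCommGroup E] [InnerProductSpace ℝ E] [CompleteSpace E]
    (φ : E → ℝ) (G : E → E) (L : ℝ)
    (hφ : ∀ y, HasFDerivAt φ (InnerProductSpace.toDual ℝ E (G y)) y)
    (hL : ∀ y z, ‖G y - G z‖ ≤ L * ‖y - z‖)
    (x s : E) (hperp : (inner ℝ (G x) s : ℝ) = 0) :
    φ (x + s) - φ x ≤ L / 2 * ‖s‖ ^ 2 := by
  set k : ℝ → ℝ := fun t => φ (x + t • s) - L / 2 * ‖s‖ ^ 2 * t ^ 2 with hk_def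
  have hline : ∀ t : ℝ, HasDerivAt (fun u : ℝ => x + u • s) s t := by
    intro t
    simpa using ((hasDerivAt_id t).smul_const s).const_add x
  have hk : ∀ t : ℝ, HasDerivAt k
      ((inner ℝ (G (x + t • s)) s : ℝ) - L * ‖s‖ ^ 2 * t) t := by
    intro t
    have h1 : HasDerivAt (fun u : ℝ => φ (x + u • s))
        ((InnerProductSpace.toDual ℝ E (G (x + t • s))) s) t :=
      (hφ (x + t • s)).comp_hasDerivAt t (hline t)
    have h2 : HasDerivAt (fun u : ℝ => L / 2 * ‖s‖ ^ 2 * u ^ 2)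
        (L / 2 * ‖s‖ ^ 2 * (2 * t)) t := by
      simpa using (hasDerivAt_pow 2 t).const_mul (L / 2 * ‖s‖ ^ 2)
    have := h1.sub h2
    simp only [InnerProductSpace.toDual_apply_apply] at this
    convert this using 1
    all_goals first | rfl | ring
  have hanti : AntitoneOn k (Set.Icc (0:ℝ) 1) := by
    apply antitoneOn_of_deriv_nonpos (convex_Icc 0 1)
    · exact fun t _ => (hk t).continuousAt.continuousWithinAt
    · exact fun t _ => (hk t).differentiableAt.differentiableWithinAt
    · intro t ht
      rw [interior_Icc] at ht
      rw [(hk t).deriv]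
      have h1 : (inner ℝ (G (x + t • s)) s : ℝ) = inner ℝ (G (x + t • s) - G x) s := by
        rw [inner_sub_left, hperp]; ring
      have h2 : ‖G (x + t • s) - G x‖ ≤ L * (t * ‖s‖) := by
        have := hL (x + t • s) x
        simpa [norm_smul, abs_of_pos ht.1] using this
      have h3 := real_inner_le_norm (G (x + t • s) - G x) s
      rw [h1]
      nlinarith [norm_nonneg s, norm_nonneg (G (x + t • s) - G x)]
  have h01 := hanti (Set.left_mem_Icc.2 zero_le_one) (Set.right_mem_Icc.2 zero_le_one)
    zero_le_one
  simp only [hk_def, zero_smul, add_zero, one_smul] at h01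
  nlinarith [h01]

lemma arith_aux (D1 D2 ns nc ny ρ Lc Llam LL κnrm σ0 θ η κc : ℝ)
    (h1 : D1 ≤ LL / 2 * ns ^ 2)
    (h2 : D2 ≤ Llam * ns * ny)
    (h3 : ny ≤ nc + Lc * ns)
    (h4 : ns ≤ θ * nc)
    (h5 : nc ≤ κc)
    (h6 : ny - nc ≤ -(κnrm * σ0 ^ 2 * nc))
    (hns : 0 ≤ ns) (hnc : 0 ≤ nc) (hny : 0 ≤ ny)
    (hLc : 0 ≤ Lc) (hLlam : 0 ≤ Llam) (hLL : 0 ≤ LL) (hθ : 0 ≤ θ) (hρ : 0 ≤ ρ)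
    (hκc : 0 < κc)
    (hAρ : κc * θ * Llam + (1 / 2) * κc * θ ^ 2 * LL + κc * θ ^ 2 * Llam * Lc + η
      ≤ ρ * (κnrm * σ0 ^ 2)) :
    D1 + D2 + ρ * (ny - nc) ≤ -(η * nc) := by
  have k0 : nc * nc ≤ κc * nc := mul_le_mul_of_nonneg_right h5 hnc
  have k1 : ns ^ 2 ≤ θ ^ 2 * (κc * nc) := by
    have := pow_le_pow_left₀ hns h4 2
    have := mul_le_mul_of_nonneg_left k0 (sq_nonneg θ)
    linarith
  have kD1 : D1 ≤ (1 / 2) * κc * θ ^ 2 * LL * nc := by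
    have := mul_le_mul_of_nonneg_left k1 (by linarith : (0:ℝ) ≤ LL / 2)
    linarith
  have k3 : ny ≤ (1 + Lc * θ) * nc := by
    have := mul_le_mul_of_nonneg_left h4 hLc
    linarith
  have kD2 : D2 ≤ (κc * θ * Llam + κc * θ ^ 2 * Llam * Lc) * nc := by
    have k2 : Llam * ns ≤ Llam * (θ * nc) := mul_le_mul_of_nonneg_left h4 hLlam
    have k4 : Llam * ns * ny ≤ (Llam * (θ * nc)) * ((1 + Lc * θ) * nc) :=
      mul_le_mul k2 k3 hny (by positivity)
    have k5 := mul_le_mul_of_nonneg_left k0 (mul_nonneg hLlam hθ)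
    have k6 := mul_le_mul_of_nonneg_left k0 (mul_nonneg (mul_nonneg hLlam hLc) (sq_nonneg θ))
    linarith
  have kP : ρ * (ny - nc) ≤ -(ρ * (κnrm * σ0 ^ 2) * nc) := by
    have := mul_le_mul_of_nonneg_left h6 hρ
    linarith
  have kA := mul_le_mul_of_nonneg_right hAρ hnc
  linarith [kD1, kD2, kP, kA]



/-- Lyapunov decrease along a normal step of the ADSWITCH algorithm: if the
penalty parameter satisfies
`ρ ≥ (κ_c θ L_λ + (1/2)κ_c θ² L_L + κ_c θ² L_λ L_c + η)/(κ_nrm σ0²)`,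
`‖c(x)‖ ≤ κ_c`, and the step `s` satisfies `⟨g_T(x), s⟩ = 0`,
`‖s‖ ≤ θ‖c(x)‖` and `‖c(x+s)‖ − ‖c(x)‖ ≤ −κ_nrm σ0² ‖c(x)‖`, then
`ψ(x+s) − ψ(x) ≤ −η‖c(x)‖`, where `ψ(x) = f(x) + λ̂(x)ᵀc(x) + ρ‖c(x)‖`. -/
theorem normal_step_lyapunov_decrease
    (n m : ℕ) (hmn : m ≤ n)
    (f : EuclideanSpace ℝ (Fin n) → ℝ)
    (c : EuclideanSpace ℝ (Fin n) → EuclideanSpace ℝ (Fin m))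
    (J : EuclideanSpace ℝ (Fin n) → (EuclideanSpace ℝ (Fin n) →L[ℝ] EuclideanSpace ℝ (Fin m)))
    (g gT : EuclideanSpace ℝ (Fin n) → EuclideanSpace ℝ (Fin n))
    (lam : EuclideanSpace ℝ (Fin n) → EuclideanSpace ℝ (Fin m))
    (ψ : EuclideanSpace ℝ (Fin n) → ℝ)
    (ρ Lc Llam LL : ℝ)
    -- differentiability: `g` is the gradient of `f` and `J` the Jacobian of `c`
    (hf : ∀ y, HasGradientAt f (g y) y)
    (hcdiff : ∀ y, HasFDerivAt c (J y) y)
    -- `J` has full row rank everywhere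
    (hrank : ∀ y, Function.Surjective (J y))
    -- least-squares multiplier and projected gradient
    (hlam : ∀ y, (J y) ((ContinuousLinearMap.adjoint (J y)) (lam y)) = -((J y) (g y)))
    (hgT : ∀ y, gT y = g y + (ContinuousLinearMap.adjoint (J y)) (lam y))
    -- Lyapunov function
    (hψ : ∀ y, ψ y = f y + (inner ℝ (lam y) (c y) : ℝ) + ρ * ‖c y‖)
    -- Lipschitz hypotheses
    (hclip : ∀ y z, ‖c y - c z‖ ≤ Lc * ‖y - z‖)
    (hctay : ∀ y z, ‖c z - c y - (J y) (z - y)‖ ≤ (Lc / 2) * ‖z - y‖ ^ 2)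
    (hlamlip : ∀ y z, ‖lam y - lam z‖ ≤ Llam * ‖y - z‖)
    (hLlip : ∀ (μ : EuclideanSpace ℝ (Fin m)) (y z : EuclideanSpace ℝ (Fin n)),
      ‖(g y + (ContinuousLinearMap.adjoint (J y)) μ) -
          (g z + (ContinuousLinearMap.adjoint (J z)) μ)‖ ≤ LL * ‖y - z‖)
    -- constants and the penalty parameter
    (κnrm σ0 θ η κc : ℝ)
    (hκnrm : 0 < κnrm) (hσ0 : σ0 ∈ Set.Ioc (0 : ℝ) 1) (hθ : 1 < θ)
    (hη : η ∈ Set.Ioc (0 : ℝ) 1) (hκc : 0 < κc)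
    (hρ : (κc * θ * Llam + (1 / 2) * κc * θ ^ 2 * LL + κc * θ ^ 2 * Llam * Lc + η) /
        (κnrm * σ0 ^ 2) ≤ ρ)
    -- the normal step
    (x s : EuclideanSpace ℝ (Fin n))
    (hcx : ‖c x‖ ≤ κc)
    (hperp : (inner ℝ (gT x) s : ℝ) = 0)
    (hsbound : ‖s‖ ≤ θ * ‖c x‖)
    (hdecrease : ‖c (x + s)‖ - ‖c x‖ ≤ -(κnrm * σ0 ^ 2 * ‖c x‖)) :
    ψ (x + s) - ψ x ≤ -(η * ‖c x‖) := by
  by_cases hc0 : c x = 0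
  · have hs0 : s = 0 := by
      have h1 : ‖s‖ ≤ 0 := by simpa [hc0] using hsbound
      simpa using le_antisymm h1 (norm_nonneg s)
    simp [hs0, hc0]
  · have hcpos : 0 < ‖c x‖ := norm_pos_iff.mpr hc0
    have hθ0 : (0:ℝ) ≤ θ := by linarith
    -- n ≥ 1
    have hn : 0 < n := by
      rcases Nat.eq_zero_or_pos n with h | h
      · exfalso
        have hm0 : m = 0 := Nat.le_zero.mp (h ▸ hmn)
        subst hm0
        have : ‖c x‖ = 0 := by simp [EuclideanSpace.norm_eq]
        linarith
      · exact h
    -- nonnegativity of the Lipschitz constants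
    set u : EuclideanSpace ℝ (Fin n) := EuclideanSpace.single (⟨0, hn⟩ : Fin n) (1:ℝ) with hu
    have hu1 : ‖u - 0‖ = 1 := by simp [hu, EuclideanSpace.norm_single]
    have hLc0 : 0 ≤ Lc := by have := hclip u 0; rw [hu1] at this; nlinarith [norm_nonneg (c u - c 0)]
    have hLlam0 : 0 ≤ Llam := by
      have := hlamlip u 0; rw [hu1] at this; nlinarith [norm_nonneg (lam u - lam 0)]
    have hLL0 : 0 ≤ LL := by
      have := hLlip 0 u 0; rw [hu1] at this
      nlinarith [norm_nonneg ((g u + (ContinuousLinearMap.adjoint (J u)) 0) -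
        (g 0 + (ContinuousLinearMap.adjoint (J 0)) 0))]
    -- ρ lower bound
    have hpos2 : 0 < κnrm * σ0 ^ 2 := mul_pos hκnrm (pow_pos hσ0.1 2)
    have hAρ : κc * θ * Llam + (1 / 2) * κc * θ ^ 2 * LL + κc * θ ^ 2 * Llam * Lc + η
        ≤ ρ * (κnrm * σ0 ^ 2) := (div_le_iff₀ hpos2).mp hρ
    have hA0 : 0 ≤ κc * θ * Llam + (1 / 2) * κc * θ ^ 2 * LL + κc * θ ^ 2 * Llam * Lc := by
      have t1 : 0 ≤ κc * θ * Llam := by positivity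
      have t2 : 0 ≤ (1 / 2) * κc * θ ^ 2 * LL := by positivity
      have t3 : 0 ≤ κc * θ ^ 2 * Llam * Lc := by positivity
      linarith
    have hρ0 : 0 ≤ ρ := by nlinarith [hη.1]
    -- descent lemma applied to the partial Lagrangian with frozen multiplier lam x
    set G : EuclideanSpace ℝ (Fin n) → EuclideanSpace ℝ (Fin n) :=
      fun z => g z + (ContinuousLinearMap.adjoint (J z)) (lam x) with hG
    have hφ' : ∀ z, HasFDerivAt (fun w => f w + (inner ℝ (lam x) (c w) : ℝ))
        (InnerProductSpace.toDual ℝ _ (G z)) z := by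
      intro z
      have h1 : HasFDerivAt f (InnerProductSpace.toDual ℝ _ (g z)) z := (hf z).hasFDerivAt
      have h2 : HasFDerivAt (fun w => (inner ℝ (lam x) (c w) : ℝ))
          ((innerSL ℝ (lam x)).comp (J z)) z :=
        ((innerSL ℝ (lam x)).hasFDerivAt).comp z (hcdiff z)
      have h3 := h1.add h2
      have hDeq : InnerProductSpace.toDual ℝ (EuclideanSpace ℝ (Fin n)) (g z) +
          (innerSL ℝ (lam x)).comp (J z) = InnerProductSpace.toDual ℝ _ (G z) := by
        ext v
        simp [hG, InnerProductSpace.toDual_apply_apply, inner_add_left,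
          ContinuousLinearMap.adjoint_inner_left]
      rw [← hDeq]; exact h3
    have hGperp : (inner ℝ (G x) s : ℝ) = 0 := by
      have hGx : G x = gT x := (hgT x).symm
      rw [hGx]; exact hperp
    have hdesc : f (x + s) + (inner ℝ (lam x) (c (x + s)) : ℝ)
        - (f x + (inner ℝ (lam x) (c x) : ℝ)) ≤ LL / 2 * ‖s‖ ^ 2 :=
      descent_aux (fun w => f w + (inner ℝ (lam x) (c w) : ℝ)) G LL hφ'
        (fun y z => hLlip (lam x) y z) x s hGperp
    -- multiplier term
    have hsub : x + s - x = s := add_sub_cancel_left x s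
    have hlamd : ‖lam (x + s) - lam x‖ ≤ Llam * ‖s‖ := by
      have := hlamlip (x + s) x; rwa [hsub] at this
    have hcy : ‖c (x + s)‖ ≤ ‖c x‖ + Lc * ‖s‖ := by
      have h1 := hclip (x + s) x
      rw [hsub] at h1
      have h2 := norm_sub_norm_le (c (x + s)) (c x)
      linarith
    have hD2 : (inner ℝ (lam (x + s) - lam x) (c (x + s)) : ℝ)
        ≤ Llam * ‖s‖ * ‖c (x + s)‖ :=
      le_trans (real_inner_le_norm _ _)
        (mul_le_mul_of_nonneg_right hlamd (norm_nonneg _))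
    have hdecomp : ψ (x + s) - ψ x
        = (f (x + s) + (inner ℝ (lam x) (c (x + s)) : ℝ) - (f x + (inner ℝ (lam x) (c x) : ℝ)))
          + (inner ℝ (lam (x + s) - lam x) (c (x + s)) : ℝ)
          + ρ * (‖c (x + s)‖ - ‖c x‖) := by
      rw [hψ (x + s), hψ x, inner_sub_left]
      ring
    rw [hdecomp]
    exact arith_aux _ _ ‖s‖ ‖c x‖ ‖c (x + s)‖ ρ Lc Llam LL κnrm σ0 θ η κc
      hdesc hD2 hcy hsbound hcx hdecrease (norm_nonneg s) (norm_nonneg _) (norm_nonneg _)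
      hLc0 hLlam0 hLL0 hθ0 hρ0 hκc hAρ
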